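/- Let α, β > −1, 1 ≤ p < ∞ and b > 0. Then there exist C > 0 and n₀ ∈ ℕ such that for all n ≥ n₀ and all u with 0 ≤ u ≤ b/n, ∫_0^{u} |P_n^{(α,β)}(cos θ)|^p sin θ dθ ≤ C n^{αp − 2}. -/

import Mathlib

open Real

/-- Log-convexity interpolation for Gamma. -/
lemma gamma_interp {x y a c : ℝ} (hx : 0 < x) (hy : 0 < y) (ha : 0 ≤ a) (hc : 0 ≤ c)
    (hac : a + c = 1) :
    Real.Gamma (a * x + c * y) ≤ Real.Gamma x ^ a * Real.Gamma y ^ c := by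
  have h := Real.convexOn_log_Gamma.2 (Set.mem_Ioi.2 hx) (Set.mem_Ioi.2 hy) ha hc hac
  simp only [Function.comp, smul_eq_mul] at h
  have hxy : 0 < a * x + c * y := by
    rcases eq_or_lt_of_le ha with h0 | h0
    · have : c = 1 := by linarith
      simp [← h0, this, hy]
    · positivity
  have h1 : Real.Gamma (a * x + c * y) = Real.exp (Real.log (Real.Gamma (a * x + c * y))) :=
    (Real.exp_log (Real.Gamma_pos_of_pos hxy)).symm
  rw [h1, Real.rpow_def_of_pos (Real.Gamma_pos_of_pos hx),
    Real.rpow_def_of_pos (Real.Gamma_pos_of_pos hy), ← Real.exp_add]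
  exact Real.exp_le_exp.2 (by simpa [mul_comm] using h)

/-- Γ(n+γ+1) ≤ ((1+max γ 0) n)^s Γ(n-s+γ+1) for s ≤ n, n ≥ 1. -/
lemma gamma_shift_down {γ : ℝ} (hγ : -1 < γ) (n : ℕ) (hn : 1 ≤ n) :
    ∀ s : ℕ, s ≤ n → Real.Gamma ((n : ℝ) + γ + 1) ≤
      ((1 + max γ 0) * n) ^ s * Real.Gamma ((n : ℝ) - s + γ + 1) := by
  intro s
  induction s with
  | zero => simp
  | succ s ih =>
    intro hs
    have hsn : s ≤ n := le_of_lt (Nat.lt_of_succ_le hs)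
    have hns : (1:ℝ) ≤ (n : ℝ) - s := by
      have : (s:ℝ) + 1 ≤ n := by exact_mod_cast hs
      linarith
    have hx : ((n : ℝ) - s + γ) ≠ 0 := by nlinarith
    have key : Real.Gamma ((n : ℝ) - s + γ + 1) = ((n:ℝ) - s + γ) * Real.Gamma ((n:ℝ) - s + γ) := by
      exact Real.Gamma_add_one hx
    have hposΓ : 0 < Real.Gamma ((n:ℝ) - s + γ) := by
      apply Real.Gamma_pos_of_pos; nlinarith
    have hfac : (n:ℝ) - s + γ ≤ (1 + max γ 0) * n := by
      have h1 : γ ≤ max γ 0 := le_max_left _ _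
      have h2 : (1:ℝ) ≤ n := by exact_mod_cast hn
      have h3 : (0:ℝ) ≤ s := by positivity
      have h4 : (0:ℝ) ≤ max γ 0 := le_max_right _ _
      nlinarith
    calc Real.Gamma ((n : ℝ) + γ + 1)
        ≤ ((1 + max γ 0) * n) ^ s * Real.Gamma ((n : ℝ) - s + γ + 1) := ih hsn
      _ = ((1 + max γ 0) * n) ^ s * (((n:ℝ) - s + γ) * Real.Gamma ((n:ℝ) - s + γ)) := by
          rw [key]
      _ ≤ ((1 + max γ 0) * n) ^ s * (((1 + max γ 0) * n) * Real.Gamma ((n:ℝ) - s + γ)) := by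
          gcongr
      _ = ((1 + max γ 0) * n) ^ (s+1) * Real.Gamma ((n : ℝ) - (s+1 : ℕ) + γ + 1) := by
          push_cast; ring_nf

/-- Γ(s+α+1) ≥ Γ(α+1)(α+1)^s. -/
lemma gamma_shift_up {α : ℝ} (hα : -1 < α) :
    ∀ s : ℕ, Real.Gamma (α + 1) * (α + 1) ^ s ≤ Real.Gamma ((s : ℝ) + α + 1) := by
  intro s
  induction s with
  | zero => simp
  | succ s ih =>
    have h1 : (0:ℝ) < α + 1 := by linarith
    have hs0 : (0:ℝ) ≤ s := by positivity
    have hpos : (0:ℝ) < (s:ℝ) + α + 1 := by linarith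
    have key : Real.Gamma ((s:ℝ) + 1 + α + 1) = ((s:ℝ) + α + 1) * Real.Gamma ((s:ℝ) + α + 1) := by
      rw [show (s:ℝ) + 1 + α + 1 = ((s:ℝ) + α + 1) + 1 by ring]
      exact Real.Gamma_add_one (ne_of_gt hpos)
    have hΓpos : 0 < Real.Gamma ((s:ℝ) + α + 1) := Real.Gamma_pos_of_pos hpos
    have : Real.Gamma (α + 1) * (α + 1) ^ (s+1) ≤ Real.Gamma ((s:ℝ) + 1 + α + 1) := by
      rw [key]
      calc Real.Gamma (α + 1) * (α + 1) ^ (s+1)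
          = (α + 1) * (Real.Gamma (α + 1) * (α + 1) ^ s) := by ring
        _ ≤ (α + 1) * Real.Gamma ((s:ℝ) + α + 1) := by gcongr
        _ ≤ ((s:ℝ) + α + 1) * Real.Gamma ((s:ℝ) + α + 1) := by nlinarith
    convert this using 3
    push_cast; ring

/-- Γ(m+1+k) ≤ ((k+1)(m+1))^k Γ(m+1). -/
lemma gamma_int_ratio (m : ℕ) : ∀ k : ℕ,
    Real.Gamma ((m : ℝ) + 1 + k) ≤ (((k:ℝ) + 1) * ((m:ℝ) + 1)) ^ k * Real.Gamma ((m:ℝ) + 1) := by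
  intro k
  induction k with
  | zero => simp
  | succ k ih =>
    have hΓpos : 0 < Real.Gamma ((m:ℝ) + 1) := Real.Gamma_pos_of_pos (by positivity)
    have key : Real.Gamma ((m:ℝ) + 1 + ((k:ℝ)+1)) = ((m:ℝ) + 1 + k) * Real.Gamma ((m:ℝ) + 1 + k) := by
      rw [show (m:ℝ) + 1 + ((k:ℝ) + 1) = ((m:ℝ) + 1 + k) + 1 by ring]
      exact Real.Gamma_add_one (by positivity)
    have hm : (0:ℝ) ≤ m := by positivity
    have hk : (0:ℝ) ≤ k := by positivity
    have step1 : ((m:ℝ) + 1 + k) * Real.Gamma ((m:ℝ) + 1 + k)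
        ≤ ((m:ℝ) + 1 + k) * ((((k:ℝ) + 1) * ((m:ℝ) + 1)) ^ k * Real.Gamma ((m:ℝ) + 1)) := by
      gcongr
    have step2 : ((m:ℝ) + 1 + k) * ((((k:ℝ) + 1) * ((m:ℝ) + 1)) ^ k * Real.Gamma ((m:ℝ) + 1))
        ≤ ((((k:ℝ) + 2) * ((m:ℝ) + 1)) ^ (k+1) * Real.Gamma ((m:ℝ) + 1)) := by
      rw [pow_succ]
      have h1 : ((m:ℝ) + 1 + k) ≤ ((k:ℝ) + 2) * ((m:ℝ) + 1) := by nlinarith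
      have h2 : (((k:ℝ) + 1) * ((m:ℝ) + 1)) ^ k ≤ (((k:ℝ) + 2) * ((m:ℝ) + 1)) ^ k := by
        gcongr
        nlinarith
      calc ((m:ℝ) + 1 + k) * ((((k:ℝ) + 1) * ((m:ℝ) + 1)) ^ k * Real.Gamma ((m:ℝ) + 1))
          ≤ (((k:ℝ) + 2) * ((m:ℝ) + 1)) * ((((k:ℝ) + 2) * ((m:ℝ) + 1)) ^ k * Real.Gamma ((m:ℝ) + 1)) := by
            exact mul_le_mul h1 (mul_le_mul h2 le_rfl hΓpos.le (by positivity)) (by positivity) (by positivity)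
        _ = (((k:ℝ) + 2) * ((m:ℝ) + 1)) ^ k * (((k:ℝ) + 2) * ((m:ℝ) + 1)) * Real.Gamma ((m:ℝ) + 1) := by
            ring
    have := le_trans (le_of_eq key) (le_trans step1 step2)
    push_cast
    exact this.trans_eq (by ring)

/-- Gautschi-type bound: Γ(m+α+1) ≤ C (m+1)^α Γ(m+1). -/
lemma gamma_ratio_bound {α : ℝ} (hα : -1 < α) :
    ∃ C : ℝ, 0 < C ∧ ∀ m : ℕ,
      Real.Gamma ((m:ℝ) + α + 1) ≤ C * ((m:ℝ) + 1) ^ α * Real.Gamma ((m:ℝ) + 1) := by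
  have hΓα : 0 < Real.Gamma (α + 1) := Real.Gamma_pos_of_pos (by linarith)
  rcases le_or_gt α 0 with hα0 | hα0
  · refine ⟨(2:ℝ) ^ (-α) + Real.Gamma (α + 1), by positivity, ?_⟩
    intro m
    rcases Nat.eq_zero_or_pos m with rfl | hm
    · simp only [Nat.cast_zero, zero_add, Real.one_rpow, Real.Gamma_one, mul_one]
      have h2 : (0:ℝ) < (2:ℝ) ^ (-α) := by positivity
      linarith
    · have hm1 : (1:ℝ) ≤ (m:ℝ) := by exact_mod_cast hm
      have hmpos : (0:ℝ) < m := by linarith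
      have hinterp := gamma_interp (x := (m:ℝ)) (y := (m:ℝ) + 1) (a := -α) (c := 1 + α)
        hmpos (by linarith) (by linarith) (by linarith) (by ring)
      have harg : -α * (m:ℝ) + (1 + α) * ((m:ℝ) + 1) = (m:ℝ) + α + 1 := by ring
      rw [harg] at hinterp
      have hΓm : 0 < Real.Gamma (m:ℝ) := Real.Gamma_pos_of_pos hmpos
      have hΓm1 : 0 < Real.Gamma ((m:ℝ) + 1) := Real.Gamma_pos_of_pos (by linarith)
      have hrec : Real.Gamma ((m:ℝ) + 1) = (m:ℝ) * Real.Gamma (m:ℝ) :=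
        Real.Gamma_add_one (ne_of_gt hmpos)
      have hGm : Real.Gamma (m:ℝ) = Real.Gamma ((m:ℝ) + 1) / (m:ℝ) := by
        rw [hrec]; field_simp
      have h1 : Real.Gamma (m:ℝ) ^ (-α) = Real.Gamma ((m:ℝ)+1) ^ (-α) * (m:ℝ) ^ α := by
        rw [hGm, Real.div_rpow hΓm1.le hmpos.le, Real.rpow_neg hmpos.le α, division_def, inv_inv]
      have h2 : Real.Gamma ((m:ℝ)+1) ^ (-α) * Real.Gamma ((m:ℝ)+1) ^ (1+α) =
          Real.Gamma ((m:ℝ)+1) := by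
        rw [← Real.rpow_add hΓm1]; norm_num
      have key : Real.Gamma ((m:ℝ) + α + 1) ≤ Real.Gamma ((m:ℝ)+1) * (m:ℝ) ^ α := by
        calc Real.Gamma ((m:ℝ) + α + 1)
            ≤ Real.Gamma (m:ℝ) ^ (-α) * Real.Gamma ((m:ℝ)+1) ^ (1+α) := hinterp
          _ = (Real.Gamma ((m:ℝ)+1) ^ (-α) * Real.Gamma ((m:ℝ)+1) ^ (1+α)) * (m:ℝ) ^ α := by
              rw [h1]; ring
          _ = Real.Gamma ((m:ℝ)+1) * (m:ℝ) ^ α := by rw [h2]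
      have hstep : (m:ℝ) ^ α ≤ (2:ℝ) ^ (-α) * ((m:ℝ)+1) ^ α := by
        have hh : (((m:ℝ)+1)/2) ^ α ≤ (2:ℝ) ^ (-α) * ((m:ℝ)+1) ^ α := by
          rw [Real.div_rpow (by linarith) (by norm_num), Real.rpow_neg (by norm_num : (0:ℝ) ≤ 2)]
          rw [div_eq_mul_inv, mul_comm]
        refine le_trans ?_ hh
        exact Real.rpow_le_rpow_of_nonpos (by linarith) (by linarith) hα0
      calc Real.Gamma ((m:ℝ) + α + 1) ≤ Real.Gamma ((m:ℝ)+1) * (m:ℝ) ^ α := key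
        _ ≤ Real.Gamma ((m:ℝ)+1) * ((2:ℝ) ^ (-α) * ((m:ℝ)+1) ^ α) := by gcongr
        _ ≤ ((2:ℝ) ^ (-α) + Real.Gamma (α + 1)) * ((m:ℝ) + 1) ^ α * Real.Gamma ((m:ℝ) + 1) := by
            have hp1 : (0:ℝ) < ((m:ℝ)+1) ^ α := Real.rpow_pos_of_pos (by linarith) α
            nlinarith [mul_pos (mul_pos hΓα hp1) hΓm1]
  · -- α > 0
    set k : ℕ := ⌈α⌉₊ + 1 with hk
    have hαk : α ≤ (k:ℝ) := by
      have := Nat.le_ceil α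
      push_cast [hk]
      linarith
    have hk1 : (1:ℝ) ≤ (k:ℝ) := by
      have : 1 ≤ k := Nat.le_add_left 1 _
      exact_mod_cast this
    have hkpos : (0:ℝ) < k := by linarith
    set t : ℝ := α / k with ht
    have ht0 : 0 < t := by positivity
    have ht1 : t ≤ 1 := by
      rw [ht, div_le_one hkpos]; nlinarith
    have htk : t * k = α := by rw [ht]; exact div_mul_cancel₀ α (ne_of_gt hkpos)
    refine ⟨((k:ℝ) + 1) ^ α, by positivity, ?_⟩
    intro m
    have hm0 : (0:ℝ) ≤ m := by positivity
    have hΓm1 : 0 < Real.Gamma ((m:ℝ) + 1) := Real.Gamma_pos_of_pos (by linarith)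
    have hinterp := gamma_interp (x := (m:ℝ) + 1) (y := (m:ℝ) + 1 + k) (a := 1 - t) (c := t)
      (by linarith) (by linarith) (by linarith) ht0.le (by ring)
    have harg : (1 - t) * ((m:ℝ) + 1) + t * ((m:ℝ) + 1 + k) = (m:ℝ) + α + 1 := by
      have : t * (k:ℝ) = α := htk
      nlinarith [this]
    rw [harg] at hinterp
    have hratio := gamma_int_ratio m k
    have hbase : (0:ℝ) ≤ ((k:ℝ) + 1) * ((m:ℝ) + 1) := by positivity
    have h3 : Real.Gamma ((m:ℝ) + 1 + k) ^ t ≤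
        ((((k:ℝ) + 1) * ((m:ℝ) + 1)) ^ (k:ℕ) * Real.Gamma ((m:ℝ)+1)) ^ t := by
      apply Real.rpow_le_rpow (Real.Gamma_pos_of_pos (by linarith)).le hratio ht0.le
    have h4 : ((((k:ℝ) + 1) * ((m:ℝ) + 1)) ^ (k:ℕ) * Real.Gamma ((m:ℝ)+1)) ^ t =
        (((k:ℝ) + 1) * ((m:ℝ) + 1)) ^ α * Real.Gamma ((m:ℝ)+1) ^ t := by
      rw [Real.mul_rpow (by positivity) hΓm1.le, ← Real.rpow_natCast (((k:ℝ) + 1) * ((m:ℝ) + 1)) k,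
        ← Real.rpow_mul hbase]
      rw [show (k:ℝ) * t = α by rw [mul_comm]; exact htk]
    have h5 : Real.Gamma ((m:ℝ)+1) ^ (1-t) * Real.Gamma ((m:ℝ)+1) ^ t = Real.Gamma ((m:ℝ)+1) := by
      rw [← Real.rpow_add hΓm1]; norm_num
    calc Real.Gamma ((m:ℝ) + α + 1)
        ≤ Real.Gamma ((m:ℝ)+1) ^ (1-t) * Real.Gamma ((m:ℝ) + 1 + k) ^ t := hinterp
      _ ≤ Real.Gamma ((m:ℝ)+1) ^ (1-t) * ((((k:ℝ) + 1) * ((m:ℝ) + 1)) ^ α *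
            Real.Gamma ((m:ℝ)+1) ^ t) := by
          rw [← h4]
          have : (0:ℝ) ≤ Real.Gamma ((m:ℝ)+1) ^ (1-t) := Real.rpow_nonneg hΓm1.le _
          exact mul_le_mul_of_nonneg_left h3 this
      _ = (((k:ℝ) + 1) * ((m:ℝ) + 1)) ^ α * (Real.Gamma ((m:ℝ)+1) ^ (1-t) *
            Real.Gamma ((m:ℝ)+1) ^ t) := by ring
      _ = ((k:ℝ) + 1) ^ α * ((m:ℝ) + 1) ^ α * Real.Gamma ((m:ℝ) + 1) := by
          rw [h5, Real.mul_rpow (by positivity) (by positivity)]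

/-- (n-s+1)^α ≤ (2^α+1)(s+1) n^α for s ≤ n, 1 ≤ n. -/
lemma base_bound {α : ℝ} (hα : -1 < α) (n s : ℕ) (hn : 1 ≤ n) (hs : s ≤ n) :
    ((n:ℝ) - s + 1) ^ α ≤ ((2:ℝ) ^ α + 1) * ((s:ℝ) + 1) * (n:ℝ) ^ α := by
  have hn1 : (1:ℝ) ≤ (n:ℝ) := by exact_mod_cast hn
  have hsn : (s:ℝ) ≤ (n:ℝ) := by exact_mod_cast hs
  have hs0 : (0:ℝ) ≤ s := by positivity
  have hpos : (0:ℝ) < (n:ℝ) - s + 1 := by linarith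
  have hnpos : (0:ℝ) < (n:ℝ) := by linarith
  have hnα : (0:ℝ) < (n:ℝ) ^ α := Real.rpow_pos_of_pos hnpos α
  have h2α : (0:ℝ) < (2:ℝ) ^ α := by positivity
  rcases le_or_gt 0 α with h0 | h0
  · -- (n-s+1) ≤ 2n
    have h1 : ((n:ℝ) - s + 1) ^ α ≤ ((2:ℝ) * n) ^ α :=
      Real.rpow_le_rpow hpos.le (by linarith) h0
    have h2 : ((2:ℝ) * n) ^ α = (2:ℝ) ^ α * (n:ℝ) ^ α :=
      Real.mul_rpow (by norm_num) hnpos.le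
    have h3 : (2:ℝ) ^ α * (n:ℝ) ^ α ≤ ((2:ℝ) ^ α + 1) * ((s:ℝ) + 1) * (n:ℝ) ^ α := by
      nlinarith [mul_nonneg (mul_nonneg h2α.le hs0) hnα.le, mul_nonneg hs0 hnα.le]
    linarith [h1.trans_eq h2]
  · -- α < 0 : n^(-α) ≤ (s+1)(n-s+1)^(-α)
    have hma : 0 < -α := by linarith
    have hma1 : -α ≤ 1 := by linarith
    have key : (n:ℝ) ^ (-α) ≤ ((s:ℝ) + 1) * ((n:ℝ) - s + 1) ^ (-α) := by
      have hle : (n:ℝ) ≤ ((s:ℝ) + 1) * ((n:ℝ) - s + 1) := by nlinarith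
      calc (n:ℝ) ^ (-α) ≤ (((s:ℝ) + 1) * ((n:ℝ) - s + 1)) ^ (-α) :=
            Real.rpow_le_rpow hnpos.le hle hma.le
        _ = ((s:ℝ) + 1) ^ (-α) * ((n:ℝ) - s + 1) ^ (-α) :=
            Real.mul_rpow (by linarith) hpos.le
        _ ≤ ((s:ℝ) + 1) * ((n:ℝ) - s + 1) ^ (-α) := by
            have h4 : ((s:ℝ) + 1) ^ (-α) ≤ ((s:ℝ) + 1) ^ (1:ℝ) :=
              Real.rpow_le_rpow_of_exponent_le (by linarith) hma1
            rw [Real.rpow_one] at h4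
            have : (0:ℝ) ≤ ((n:ℝ) - s + 1) ^ (-α) := (Real.rpow_pos_of_pos hpos _).le
            exact mul_le_mul_of_nonneg_right h4 this
    have hA : (0:ℝ) < ((n:ℝ) - s + 1) ^ (-α) := Real.rpow_pos_of_pos hpos _
    have hB : (0:ℝ) < (n:ℝ) ^ (-α) := Real.rpow_pos_of_pos hnpos _
    have e1 : ((n:ℝ) - s + 1) ^ α = (((n:ℝ) - s + 1) ^ (-α))⁻¹ := by
      rw [← Real.rpow_neg hpos.le, neg_neg]
    have e2 : (n:ℝ) ^ α = ((n:ℝ) ^ (-α))⁻¹ := by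
      rw [← Real.rpow_neg hnpos.le, neg_neg]
    have main : ((n:ℝ) - s + 1) ^ α ≤ ((s:ℝ) + 1) * (n:ℝ) ^ α := by
      rw [e1, e2]
      rw [inv_le_iff_one_le_mul₀ hA]
      have h5 : (1:ℝ) ≤ ((s:ℝ) + 1) * (((n:ℝ) - s + 1) ^ (-α) * ((n:ℝ) ^ (-α))⁻¹) := by
        calc (1:ℝ) = (n:ℝ) ^ (-α) * ((n:ℝ) ^ (-α))⁻¹ := (mul_inv_cancel₀ (ne_of_gt hB)).symm
          _ ≤ (((s:ℝ) + 1) * ((n:ℝ) - s + 1) ^ (-α)) * ((n:ℝ) ^ (-α))⁻¹ := by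
              gcongr
          _ = ((s:ℝ) + 1) * (((n:ℝ) - s + 1) ^ (-α) * ((n:ℝ) ^ (-α))⁻¹) := by ring
      calc ((s:ℝ) + 1) * ((n:ℝ) ^ (-α))⁻¹ * ((n:ℝ) - s + 1) ^ (-α)
          = ((s:ℝ) + 1) * (((n:ℝ) - s + 1) ^ (-α) * ((n:ℝ) ^ (-α))⁻¹) := by ring
        _ ≥ 1 := h5
    calc ((n:ℝ) - s + 1) ^ α ≤ ((s:ℝ) + 1) * (n:ℝ) ^ α := main
      _ ≤ ((2:ℝ) ^ α + 1) * ((s:ℝ) + 1) * (n:ℝ) ^ α := by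
          nlinarith [mul_nonneg (mul_nonneg h2α.le (by linarith : (0:ℝ) ≤ (s:ℝ) + 1)) hnα.le]

/-- ∑ (s+1) x^s / s! ≤ (1+x) e^x. -/
lemma sum_weight_le {x : ℝ} (hx : 0 ≤ x) (N : ℕ) :
    ∑ s ∈ Finset.range N, ((s:ℝ) + 1) * x ^ s / s.factorial ≤ (1 + x) * Real.exp x := by
  have hsplit : ∀ s : ℕ, ((s:ℝ) + 1) * x ^ s / s.factorial =
      x ^ s / s.factorial + (s:ℝ) * x ^ s / s.factorial := by
    intro s; ring
  rw [Finset.sum_congr rfl fun s _ => hsplit s, Finset.sum_add_distrib]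
  have h1 : ∑ s ∈ Finset.range N, x ^ s / (s.factorial : ℝ) ≤ Real.exp x :=
    Real.sum_le_exp_of_nonneg hx N
  have h2 : ∑ s ∈ Finset.range N, (s:ℝ) * x ^ s / s.factorial ≤ x * Real.exp x := by
    cases N with
    | zero => simp; positivity
    | succ M =>
      rw [Finset.sum_range_succ']
      simp only [Nat.cast_zero, zero_mul, pow_zero, Nat.factorial_zero, Nat.cast_one, zero_div,
        add_zero]
      have heq : ∀ i ∈ Finset.range M, (((i+1:ℕ)):ℝ) * x ^ (i + 1) / (((i+1:ℕ)).factorial:ℝ) =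
          x * (x ^ i / (i.factorial:ℝ)) := by
        intro i _
        rw [Nat.factorial_succ]
        push_cast
        have hfac : ((i.factorial : ℝ)) ≠ 0 := by positivity
        field_simp
        ring
      rw [Finset.sum_congr rfl heq, ← Finset.mul_sum]
      exact mul_le_mul_of_nonneg_left (Real.sum_le_exp_of_nonneg hx M) hx
  calc _ ≤ Real.exp x + x * Real.exp x := add_le_add h1 h2
    _ = (1 + x) * Real.exp x := by ring

/-- The Jacobi polynomial `P_n^{(α,β)}` as a real function. -/
noncomputable def jacobiP (n : ℕ) (α β : ℝ) (x : ℝ) : ℝ :=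
  ∑ s ∈ Finset.range (n + 1),
    (Real.Gamma (n + α + 1) / (Real.Gamma (s + α + 1) * Real.Gamma ((n : ℝ) - s + 1))) *
    (Real.Gamma (n + β + 1) / (Real.Gamma ((n : ℝ) - s + β + 1) * Real.Gamma (s + 1))) *
    ((x - 1) / 2) ^ s * ((x + 1) / 2) ^ (n - s)

lemma alg_aux2 (ca cb b n a1 : ℝ) (hn : n ≠ 0) (ha1 : a1 ≠ 0) :
    ca * n * (cb * n) * (b ^ 2 / (4 * n ^ 2)) / a1 = ca * cb * b ^ 2 / (4 * a1) := by
  field_simp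

lemma alg_aux (X C D s1 Nα G E Y F P : ℝ) (hG : G ≠ 0) (hE : E ≠ 0) (hF : F ≠ 0) :
    (X * C * (D * s1 * Nα) / (G * E)) * (Y / F) * P * 1 =
      C * D * (s1 * ((X * Y * P / E) / F)) * Nα / G := by
  field_simp

lemma jacobi_pointwise {α β b : ℝ} (hα : -1 < α) (hβ : -1 < β) (hb : 0 < b) :
    ∃ A : ℝ, 0 < A ∧ ∀ n : ℕ, 1 ≤ n → ∀ x : ℝ, -1 ≤ x → x ≤ 1 →
      1 - x ≤ b ^ 2 / (2 * (n:ℝ) ^ 2) → |jacobiP n α β x| ≤ A * (n:ℝ) ^ α := by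
  obtain ⟨C3, hC3, hC3b⟩ := gamma_ratio_bound hα
  have hΓα : 0 < Real.Gamma (α + 1) := Real.Gamma_pos_of_pos (by linarith)
  set cα : ℝ := 1 + max α 0 with hcα
  set cβ : ℝ := 1 + max β 0 with hcβ
  have hcα0 : 0 < cα := by rw [hcα]; have := le_max_right α 0; linarith
  have hcβ0 : 0 < cβ := by rw [hcβ]; have := le_max_right β 0; linarith
  set D : ℝ := (2:ℝ) ^ α + 1 with hD
  have hD0 : 0 < D := by rw [hD]; positivity
  set q : ℝ := cα * cβ * b ^ 2 / (4 * (α + 1)) with hq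
  have hq0 : 0 < q := by
    rw [hq]
    exact div_pos (mul_pos (mul_pos hcα0 hcβ0) (pow_pos hb 2)) (by linarith)
  refine ⟨C3 * D * ((1 + q) * Real.exp q) / Real.Gamma (α + 1), by positivity, ?_⟩
  intro n hn x hx1 hx2 hxb
  have hn1 : (1:ℝ) ≤ (n:ℝ) := by exact_mod_cast hn
  have hnpos : (0:ℝ) < (n:ℝ) := by linarith
  have hnα : (0:ℝ) < (n:ℝ) ^ α := Real.rpow_pos_of_pos hnpos α
  -- termwise bound
  have term_bound : ∀ s ∈ Finset.range (n + 1),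
      |(Real.Gamma (n + α + 1) / (Real.Gamma (s + α + 1) * Real.Gamma ((n : ℝ) - s + 1))) *
        (Real.Gamma (n + β + 1) / (Real.Gamma ((n : ℝ) - s + β + 1) * Real.Gamma (s + 1))) *
        ((x - 1) / 2) ^ s * ((x + 1) / 2) ^ (n - s)| ≤
        C3 * D * (((s:ℝ) + 1) * (q ^ s / (s.factorial:ℝ))) * (n:ℝ) ^ α / Real.Gamma (α + 1) := by
    intro s hs
    have hsn : s ≤ n := Nat.lt_succ_iff.mp (Finset.mem_range.mp hs)
    have hsR : (s:ℝ) ≤ (n:ℝ) := by exact_mod_cast hsn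
    have hs0 : (0:ℝ) ≤ (s:ℝ) := by positivity
    have hΓ1 : 0 < Real.Gamma ((s:ℝ) + α + 1) := Real.Gamma_pos_of_pos (by linarith)
    have hΓ2 : 0 < Real.Gamma ((n:ℝ) - s + 1) := Real.Gamma_pos_of_pos (by linarith)
    have hΓ3 : 0 < Real.Gamma ((n:ℝ) - s + β + 1) := Real.Gamma_pos_of_pos (by linarith)
    have hΓ4 : 0 < Real.Gamma ((s:ℝ) + 1) := Real.Gamma_pos_of_pos (by linarith)
    have hΓnα : 0 < Real.Gamma ((n:ℝ) + α + 1) := Real.Gamma_pos_of_pos (by linarith)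
    have hΓnβ : 0 < Real.Gamma ((n:ℝ) + β + 1) := Real.Gamma_pos_of_pos (by linarith)
    set a1 : ℝ := Real.Gamma ((n:ℝ) + α + 1) / (Real.Gamma ((s:ℝ) + α + 1) * Real.Gamma ((n : ℝ) - s + 1)) with ha1
    set a2 : ℝ := Real.Gamma ((n:ℝ) + β + 1) / (Real.Gamma ((n : ℝ) - s + β + 1) * Real.Gamma ((s:ℝ) + 1)) with ha2
    have ha1p : 0 < a1 := by rw [ha1]; positivity
    have ha2p : 0 < a2 := by rw [ha2]; positivity
    have hy1 : |(x - 1) / 2| = (1 - x) / 2 := by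
      rw [abs_of_nonpos (by linarith)]; ring
    have hy2 : (0:ℝ) ≤ (x + 1) / 2 := by linarith
    have hy2' : (x + 1) / 2 ≤ 1 := by linarith
    have habs : |a1 * a2 * ((x - 1) / 2) ^ s * ((x + 1) / 2) ^ (n - s)| =
        a1 * a2 * ((1 - x) / 2) ^ s * ((x + 1) / 2) ^ (n - s) := by
      rw [abs_mul, abs_mul, abs_mul, abs_pow, abs_pow, abs_of_pos ha1p, abs_of_pos ha2p,
        hy1, abs_of_nonneg hy2]
    rw [habs]
    have h1x : (0:ℝ) ≤ (1 - x) / 2 := by linarith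
    have h1x' : (1 - x) / 2 ≤ b ^ 2 / (4 * (n:ℝ) ^ 2) := by
      have : b ^ 2 / (4 * (n:ℝ) ^ 2) = (b ^ 2 / (2 * (n:ℝ) ^ 2)) / 2 := by ring
      rw [this]; linarith
    -- a1 bound
    have hcast : ((n - s : ℕ):ℝ) = (n:ℝ) - s := by
      push_cast [hsn]; ring
    have hC3m : Real.Gamma ((n:ℝ) - s + α + 1) ≤
        C3 * ((n:ℝ) - s + 1) ^ α * Real.Gamma ((n:ℝ) - s + 1) := by
      have := hC3b (n - s)
      rwa [hcast] at this
    have hbase := base_bound hα n s hn hsn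
    have hup := gamma_shift_up hα s
    have hup' : 0 < Real.Gamma (α + 1) * (α + 1) ^ s := by
      have : (0:ℝ) < α + 1 := by linarith
      positivity
    have ha1b : a1 ≤ (cα * n) ^ s * C3 * (D * ((s:ℝ) + 1) * (n:ℝ) ^ α) /
        (Real.Gamma (α + 1) * (α + 1) ^ s) := by
      have step1 : a1 ≤ (cα * n) ^ s * C3 * ((n:ℝ) - s + 1) ^ α / Real.Gamma ((s:ℝ) + α + 1) := by
        rw [ha1]
        calc Real.Gamma ((n:ℝ) + α + 1) / (Real.Gamma ((s:ℝ) + α + 1) * Real.Gamma ((n : ℝ) - s + 1))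
            ≤ ((cα * n) ^ s * Real.Gamma ((n:ℝ) - s + α + 1)) /
              (Real.Gamma ((s:ℝ) + α + 1) * Real.Gamma ((n : ℝ) - s + 1)) := by
              gcongr
              exact gamma_shift_down hα n hn s hsn
          _ ≤ ((cα * n) ^ s * (C3 * ((n:ℝ) - s + 1) ^ α * Real.Gamma ((n:ℝ) - s + 1))) /
              (Real.Gamma ((s:ℝ) + α + 1) * Real.Gamma ((n : ℝ) - s + 1)) := by
              gcongr
          _ = (cα * n) ^ s * C3 * ((n:ℝ) - s + 1) ^ α / Real.Gamma ((s:ℝ) + α + 1) := by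
              field_simp
      have step2 : (cα * n) ^ s * C3 * ((n:ℝ) - s + 1) ^ α / Real.Gamma ((s:ℝ) + α + 1) ≤
          (cα * n) ^ s * C3 * (D * ((s:ℝ) + 1) * (n:ℝ) ^ α) / Real.Gamma ((s:ℝ) + α + 1) := by
        gcongr
      have step3 : (cα * n) ^ s * C3 * (D * ((s:ℝ) + 1) * (n:ℝ) ^ α) / Real.Gamma ((s:ℝ) + α + 1) ≤
          (cα * n) ^ s * C3 * (D * ((s:ℝ) + 1) * (n:ℝ) ^ α) / (Real.Gamma (α + 1) * (α + 1) ^ s) := by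
        gcongr
      exact le_trans (le_trans step1 step2) step3
    -- a2 bound
    have ha2b : a2 ≤ (cβ * n) ^ s / (s.factorial:ℝ) := by
      rw [ha2]
      calc Real.Gamma ((n:ℝ) + β + 1) / (Real.Gamma ((n : ℝ) - s + β + 1) * Real.Gamma ((s:ℝ) + 1))
          ≤ ((cβ * n) ^ s * Real.Gamma ((n:ℝ) - s + β + 1)) /
            (Real.Gamma ((n : ℝ) - s + β + 1) * Real.Gamma ((s:ℝ) + 1)) := by
            gcongr
            exact gamma_shift_down hβ n hn s hsn
        _ = (cβ * n) ^ s / Real.Gamma ((s:ℝ) + 1) := by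
            field_simp
        _ = (cβ * n) ^ s / (s.factorial:ℝ) := by
            rw [Real.Gamma_nat_eq_factorial]
    -- y parts
    have hy2pow : ((x + 1) / 2) ^ (n - s) ≤ 1 := pow_le_one₀ hy2 hy2'
    have hy1pow : ((1 - x) / 2) ^ s ≤ (b ^ 2 / (4 * (n:ℝ) ^ 2)) ^ s := by
      gcongr
    -- combine
    have hmain : a1 * a2 * ((1 - x) / 2) ^ s * ((x + 1) / 2) ^ (n - s) ≤
        ((cα * n) ^ s * C3 * (D * ((s:ℝ) + 1) * (n:ℝ) ^ α) / (Real.Gamma (α + 1) * (α + 1) ^ s)) *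
        ((cβ * n) ^ s / (s.factorial:ℝ)) * (b ^ 2 / (4 * (n:ℝ) ^ 2)) ^ s * 1 := by
      gcongr
    have heq : ((cα * n) ^ s * C3 * (D * ((s:ℝ) + 1) * (n:ℝ) ^ α) / (Real.Gamma (α + 1) * (α + 1) ^ s)) *
        ((cβ * n) ^ s / (s.factorial:ℝ)) * (b ^ 2 / (4 * (n:ℝ) ^ 2)) ^ s * 1 =
        C3 * D * (((s:ℝ) + 1) * (q ^ s / (s.factorial:ℝ))) * (n:ℝ) ^ α / Real.Gamma (α + 1) := by
      have hqpow : q ^ s = (cα * n) ^ s * (cβ * n) ^ s * (b ^ 2 / (4 * (n:ℝ) ^ 2)) ^ s / (α + 1) ^ s := by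
        rw [← mul_pow, ← mul_pow, ← div_pow]
        congr 1
        rw [hq]
        exact (alg_aux2 cα cβ b (n:ℝ) (α+1) (ne_of_gt hnpos) (by linarith)).symm
      rw [hqpow]
      have hα1 : ((α:ℝ) + 1) ^ s ≠ 0 := by
        have : (0:ℝ) < α + 1 := by linarith
        positivity
      have hfac : ((s.factorial:ℝ)) ≠ 0 := by positivity
      exact alg_aux _ _ _ _ _ _ _ _ _ _ (ne_of_gt hΓα) hα1 hfac
    calc a1 * a2 * ((1 - x) / 2) ^ s * ((x + 1) / 2) ^ (n - s) ≤ _ := hmain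
      _ = _ := heq
  -- sum up
  have hsum : |jacobiP n α β x| ≤
      ∑ s ∈ Finset.range (n + 1),
        C3 * D * (((s:ℝ) + 1) * (q ^ s / (s.factorial:ℝ))) * (n:ℝ) ^ α / Real.Gamma (α + 1) := by
    rw [jacobiP]
    exact le_trans (Finset.abs_sum_le_sum_abs _ _) (Finset.sum_le_sum term_bound)
  have hfinal : ∑ s ∈ Finset.range (n + 1),
      C3 * D * (((s:ℝ) + 1) * (q ^ s / (s.factorial:ℝ))) * (n:ℝ) ^ α / Real.Gamma (α + 1) ≤
      C3 * D * ((1 + q) * Real.exp q) / Real.Gamma (α + 1) * (n:ℝ) ^ α := by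
    have : ∑ s ∈ Finset.range (n + 1),
        C3 * D * (((s:ℝ) + 1) * (q ^ s / (s.factorial:ℝ))) * (n:ℝ) ^ α / Real.Gamma (α + 1) =
        C3 * D * (n:ℝ) ^ α / Real.Gamma (α + 1) *
          ∑ s ∈ Finset.range (n + 1), ((s:ℝ) + 1) * q ^ s / (s.factorial:ℝ) := by
      rw [Finset.mul_sum]
      apply Finset.sum_congr rfl
      intro s _
      ring
    rw [this]
    have hsw := sum_weight_le hq0.le (n + 1)
    calc C3 * D * (n:ℝ) ^ α / Real.Gamma (α + 1) *
          ∑ s ∈ Finset.range (n + 1), ((s:ℝ) + 1) * q ^ s / (s.factorial:ℝ)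
        ≤ C3 * D * (n:ℝ) ^ α / Real.Gamma (α + 1) * ((1 + q) * Real.exp q) := by
          gcongr
        _ = C3 * D * ((1 + q) * Real.exp q) / Real.Gamma (α + 1) * (n:ℝ) ^ α := by
          ring
  exact le_trans hsum hfinal

theorem jacobi_integral_near_one_upper_bound
    (α β p b : ℝ) (hα : -1 < α) (hβ : -1 < β) (hp : 1 ≤ p) (hb : 0 < b) :
    ∃ (C : ℝ) (n₀ : ℕ), 0 < C ∧ ∀ n : ℕ, n₀ ≤ n → ∀ u : ℝ, 0 ≤ u → u ≤ b / n →
      (∫ θ in (0 : ℝ)..u, |jacobiP n α β (Real.cos θ)| ^ p * Real.sin θ) ≤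
        C * (n : ℝ) ^ (α * p - 2) := by
  obtain ⟨A, hA, hAb⟩ := jacobi_pointwise hα hβ hb
  refine ⟨A ^ p * b ^ 2 / 2, ⌈b⌉₊ + 1, by positivity, ?_⟩
  intro n hn u hu hub
  have hn1 : 1 ≤ n := le_trans (Nat.le_add_left 1 _) hn
  have hn1R : (1:ℝ) ≤ (n:ℝ) := by exact_mod_cast hn1
  have hnpos : (0:ℝ) < (n:ℝ) := by linarith
  have hbn : b ≤ (n:ℝ) := by
    have h1 : b ≤ (⌈b⌉₊:ℝ) := Nat.le_ceil b
    have h2 : ((⌈b⌉₊ + 1 : ℕ):ℝ) ≤ (n:ℝ) := by exact_mod_cast hn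
    push_cast at h2
    linarith
  have hu1 : u ≤ 1 := by
    calc u ≤ b / n := hub
      _ ≤ 1 := by rw [div_le_one hnpos]; exact hbn
  have hπ : (1:ℝ) ≤ Real.pi := by
    have := Real.pi_gt_three
    linarith
  set M : ℝ := A * (n:ℝ) ^ α with hM
  have hM0 : 0 < M := by
    rw [hM]
    exact mul_pos hA (Real.rpow_pos_of_pos hnpos α)
  have hp0 : (0:ℝ) ≤ p := by linarith
  have hptf : ∀ θ ∈ Set.Icc (0:ℝ) u,
      |jacobiP n α β (Real.cos θ)| ^ p * Real.sin θ ≤ M ^ p * Real.sin θ := by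
    intro θ hθ
    obtain ⟨hθ0, hθu⟩ := hθ
    have hsin : 0 ≤ Real.sin θ :=
      Real.sin_nonneg_of_nonneg_of_le_pi hθ0 (by linarith)
    have hc1 : Real.cos θ ≤ 1 := Real.cos_le_one θ
    have hc2 : -1 ≤ Real.cos θ := Real.neg_one_le_cos θ
    have h1c : 1 - Real.cos θ ≤ b ^ 2 / (2 * (n:ℝ) ^ 2) := by
      have ha := Real.one_sub_sq_div_two_le_cos (x := θ)
      have hθ2 : θ ^ 2 ≤ (b / n) ^ 2 := by
        have : θ ≤ b / n := le_trans hθu hub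
        nlinarith
      have : (b / (n:ℝ)) ^ 2 / 2 = b ^ 2 / (2 * (n:ℝ) ^ 2) := by
        field_simp
      nlinarith
    have hjb : |jacobiP n α β (Real.cos θ)| ≤ M := hAb n hn1 _ hc2 hc1 h1c
    have hrp : |jacobiP n α β (Real.cos θ)| ^ p ≤ M ^ p :=
      Real.rpow_le_rpow (abs_nonneg _) hjb hp0
    exact mul_le_mul_of_nonneg_right hrp hsin
  have hcontj : Continuous fun x : ℝ => jacobiP n α β x := by
    unfold jacobiP
    apply continuous_finset_sum
    intro s _
    fun_prop
  have hcont : Continuous fun θ : ℝ => |jacobiP n α β (Real.cos θ)| ^ p * Real.sin θ := by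
    apply Continuous.mul _ Real.continuous_sin
    apply Continuous.rpow_const ((hcontj.comp Real.continuous_cos).abs)
    intro θ
    exact Or.inr hp0
  have hint1 : IntervalIntegrable (fun θ : ℝ => |jacobiP n α β (Real.cos θ)| ^ p * Real.sin θ)
      MeasureTheory.volume 0 u := hcont.intervalIntegrable 0 u
  have hint2 : IntervalIntegrable (fun θ : ℝ => M ^ p * Real.sin θ)
      MeasureTheory.volume 0 u :=
    (continuous_const.mul Real.continuous_sin).intervalIntegrable 0 u
  have hmono := intervalIntegral.integral_mono_on hu hint1 hint2 hptf
  have hval : (∫ θ in (0:ℝ)..u, M ^ p * Real.sin θ) = M ^ p * (1 - Real.cos u) := by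
    rw [intervalIntegral.integral_const_mul, integral_sin, Real.cos_zero]
  have hMp : (0:ℝ) ≤ M ^ p := (Real.rpow_pos_of_pos hM0 p).le
  have hcosu : 1 - Real.cos u ≤ b ^ 2 / (2 * (n:ℝ) ^ 2) := by
    have ha := Real.one_sub_sq_div_two_le_cos (x := u)
    have hu2 : u ^ 2 ≤ (b / n) ^ 2 := by nlinarith
    have : (b / (n:ℝ)) ^ 2 / 2 = b ^ 2 / (2 * (n:ℝ) ^ 2) := by
      field_simp
    nlinarith
  have hMpval : M ^ p = A ^ p * (n:ℝ) ^ (α * p) := by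
    rw [hM, Real.mul_rpow hA.le (Real.rpow_pos_of_pos hnpos α).le, ← Real.rpow_mul hnpos.le]
  have hfinal : M ^ p * (b ^ 2 / (2 * (n:ℝ) ^ 2)) =
      A ^ p * b ^ 2 / 2 * (n:ℝ) ^ (α * p - 2) := by
    rw [hMpval]
    have hpow : (n:ℝ) ^ (α * p - 2) = (n:ℝ) ^ (α * p) / (n:ℝ) ^ (2:ℕ) := by
      rw [Real.rpow_sub hnpos, show ((2:ℝ)) = ((2:ℕ):ℝ) by norm_num, Real.rpow_natCast]
    rw [hpow]
    have hn2 : ((n:ℝ) ^ (2:ℕ)) ≠ 0 := by positivity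
    field_simp
  calc (∫ θ in (0:ℝ)..u, |jacobiP n α β (Real.cos θ)| ^ p * Real.sin θ)
      ≤ ∫ θ in (0:ℝ)..u, M ^ p * Real.sin θ := hmono
    _ = M ^ p * (1 - Real.cos u) := hval
    _ ≤ M ^ p * (b ^ 2 / (2 * (n:ℝ) ^ 2)) := by
        exact mul_le_mul_of_nonneg_left hcosu hMp
    _ = A ^ p * b ^ 2 / 2 * (n:ℝ) ^ (α * p - 2) := hfinal
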